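/- arXiv:1302.6068 — 6 statements merged into one kernel-verified Lean document; each statement's English description precedes it below -/
import Mathlib

section
/- Let A be an n×n matrix over a commutative ring, and let x, y be column vectors of length n. Then det(A + x·yᵀ) = det(A) + yᵀ·adj(A)·x, where adj(A) is the adjugate (classical adjoint) matrix of A. -/
open Matrix

theorem det_add_vecMulVec {R : Type*} [CommRing R] {n : ℕ}
    (A : Matrix (Fin n) (Fin n) R) (x y : Fin n → R) :
    (A + Matrix.vecMulVec x y).det = A.det + y ⬝ᵥ (A.adjugate).mulVec x := by
  classical
  set f : (Fin n → R) [⋀^Fin n]→ₗ[R] R := Matrix.detRowAlternating with hf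
  set m : Fin n → Fin n → R := fun i => x i • y with hm
  have hA' : ∀ i, (fun i => A i : Fin n → Fin n → R) i = A i := fun _ => rfl
  have hAdd : (A + Matrix.vecMulVec x y) = m + (fun i => A i : Fin n → Fin n → R) := by
    ext i j
    simp [m, vecMulVec_apply, add_comm, mul_comm]
  have h1 : (A + Matrix.vecMulVec x y).det = ∑ s : Finset (Fin n), f (s.piecewise m A) := by
    rw [hAdd]
    exact (f : MultilinearMap R (fun _ : Fin n => Fin n → R) R).map_add_univ m (fun i => A i)
  -- terms with two or more elements vanish
  have hzero : ∀ s : Finset (Fin n), 1 < s.card → f (s.piecewise m A) = 0 := by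
    intro s hs
    obtain ⟨i, hi, j, hj, hij⟩ := Finset.one_lt_card.mp hs
    have hpi : s.piecewise m A = Function.update (s.piecewise m A) i (x i • y) := by
      ext k
      rcases eq_or_ne k i with rfl | hk
      · simp [Finset.piecewise_eq_of_mem _ _ _ hi, hm, Finset.piecewise, hi]
      · simp [Function.update_of_ne hk]
    rw [hpi, f.map_update_smul]
    have hpj : Function.update (s.piecewise m A) i y =
        Function.update (Function.update (s.piecewise m A) i y) j (x j • y) := by
      ext k
      rcases eq_or_ne k j with rfl | hk
      · simp [Function.update_of_ne (Ne.symm hij), Finset.piecewise_eq_of_mem _ _ _ hj, hm, Finset.piecewise, hj]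
      · simp [Function.update_of_ne hk]
    rw [hpj, f.map_update_smul]
    have h0 : f (Function.update (Function.update (s.piecewise m A) i y) j y) = 0 := by
      apply f.map_eq_zero_of_eq _ _ (Ne.symm hij)
      simp [Function.update_of_ne, hij, Ne.symm hij]
    rw [h0, smul_zero, smul_zero]
  -- restrict the sum to ∅ and singletons
  set T : Finset (Finset (Fin n)) :=
    insert ∅ (Finset.univ.image (fun i : Fin n => ({i} : Finset (Fin n)))) with hT
  have hsum : ∑ s : Finset (Fin n), f (s.piecewise m A) = ∑ s ∈ T, f (s.piecewise m A) := by
    refine (Finset.sum_subset (Finset.subset_univ T) ?_).symm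
    intro s _ hsT
    apply hzero
    have h0 : s ≠ ∅ := fun h => hsT (by simp [hT, h])
    have h1 : s.card ≠ 1 := by
      intro h
      obtain ⟨i, rfl⟩ := Finset.card_eq_one.mp h
      exact hsT (by simp [hT])
    have h2 : s.card ≠ 0 := fun h => h0 (Finset.card_eq_zero.mp h)
    omega
  have hempty : (∅ : Finset (Fin n)) ∉
      Finset.univ.image (fun i : Fin n => ({i} : Finset (Fin n))) := by
    simp
  have hsumT : ∑ s ∈ T, f (s.piecewise m A)
      = f ((∅ : Finset (Fin n)).piecewise m A)
        + ∑ i : Fin n, f (({i} : Finset (Fin n)).piecewise m A) := by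
    rw [hT, Finset.sum_insert hempty, Finset.sum_image (fun a _ b _ h =>
      Finset.singleton_injective h)]
  have hE : f ((∅ : Finset (Fin n)).piecewise m A) = A.det := by
    erw [Finset.piecewise_empty]; rfl
  have hS : ∀ i : Fin n, f (({i} : Finset (Fin n)).piecewise m A)
      = x i * (A.updateRow i y).det := by
    intro i
    erw [Finset.piecewise_singleton]
    have : Function.update A i (m i) = Function.update A i (x i • y) := rfl
    erw [this, f.map_update_smul]
    have : f (Function.update A i y) = (A.updateRow i y).det := rfl
    rw [this, smul_eq_mul]
  have hRHS : y ⬝ᵥ (A.adjugate).mulVec x = ∑ i : Fin n, x i * (A.updateRow i y).det := by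
    rw [dotProduct_mulVec]
    have hv : y ᵥ* A.adjugate = Aᵀ.cramer y := by
      rw [cramer_eq_adjugate_mulVec, ← adjugate_transpose, ← vecMul_transpose, transpose_transpose]
    rw [hv]
    simp only [dotProduct]
    exact Finset.sum_congr rfl fun i _ => by rw [cramer_transpose_apply, mul_comm]
  rw [h1, hsum, hsumT, hE, hRHS]
  congr 1
  exact Finset.sum_congr rfl fun i _ => hS i
end

section
/- (Jacobi identity for determinants / adjugate minors) Let A be an n×n matrix over a commutative ring with n ≥ 2, and let i ≠ j be indices. Then adj(A)ᵢᵢ·adj(A)ⱼⱼ − adj(A)ᵢⱼ·adj(A)ⱼᵢ = det(A)·det(A⟨i,j⟩), where A⟨i,j⟩ is the (n−2)×(n−2) matrix obtained from A by deleting rows i,j and columns i,j. -/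
open Matrix

private lemma jacobi_aux {R : Type*} [CommRing R] {n : ℕ}
    (A : Matrix (Fin n) (Fin n) R) (i j : Fin n) (hij : i ≠ j) :
    A.det * (A.adjugate i i * A.adjugate j j - A.adjugate i j * A.adjugate j i) =
      A.det * (A.det * (A.submatrix (fun k : {k : Fin n // k ≠ i ∧ k ≠ j} => k.val)
        (fun k : {k : Fin n // k ≠ i ∧ k ≠ j} => k.val)).det) := by
  classical
  set S := {k : Fin n // k ≠ i ∧ k ≠ j}
  set f : S ⊕ Fin 2 → Fin n := Sum.elim Subtype.val ![i, j] with hf_def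
  have hf0 : f (Sum.inr 0) = i := rfl
  have hf1 : f (Sum.inr 1) = j := rfl
  have hfl : ∀ k : S, f (Sum.inl k) = k.val := fun _ => rfl
  have hfr : ∀ p : Fin 2, f (Sum.inr p) = i ∨ f (Sum.inr p) = j := by
    intro p; fin_cases p; exacts [Or.inl rfl, Or.inr rfl]
  have hbij : Function.Bijective f := by
    constructor
    · rintro (k | p) (l | q) h
      · exact congrArg Sum.inl (Subtype.ext h)
      · exfalso
        rw [hfl] at h
        rcases hfr q with hq | hq <;> rw [hq] at h
        · exact k.2.1 h
        · exact k.2.2 h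
      · exfalso
        rw [hfl] at h
        rcases hfr p with hp | hp <;> rw [hp] at h
        · exact l.2.1 h.symm
        · exact l.2.2 h.symm
      · congr 1
        fin_cases p <;> fin_cases q <;> simp only [hf_def, Sum.elim_inr,
          Matrix.cons_val_zero, Matrix.cons_val_one, Matrix.head_cons] at h ⊢
        · exact absurd h hij
        · exact absurd h.symm hij
    · intro m
      by_cases h1 : m = i
      · exact ⟨Sum.inr 0, by rw [hf0, h1]⟩
      by_cases h2 : m = j
      · exact ⟨Sum.inr 1, by rw [hf1, h2]⟩
      · exact ⟨Sum.inl ⟨m, h1, h2⟩, rfl⟩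
  set e : (S ⊕ Fin 2) ≃ Fin n := Equiv.ofBijective f hbij with he_def
  have he : ∀ x, e x = f x := fun _ => rfl
  set B : Matrix (Fin n) (Fin n) R := Matrix.of fun k l =>
    if l = i then A.adjugate k i else if l = j then A.adjugate k j else
      if k = l then 1 else 0 with hB_def
  set C : Matrix (Fin n) (Fin n) R := Matrix.of fun k l =>
    if l = i then (if k = i then A.det else 0) else
      if l = j then (if k = j then A.det else 0) else A k l with hC_def
  have hAB : A * B = C := by
    ext k l
    rw [Matrix.mul_apply]
    by_cases hl1 : l = i
    · subst hl1
      have : ∑ m, A k m * B m l = (A * A.adjugate) k l := by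
        rw [Matrix.mul_apply]
        refine Finset.sum_congr rfl fun m _ => ?_
        simp [hB_def]
      rw [this, Matrix.mul_adjugate, Matrix.smul_apply, Matrix.one_apply]
      simp [hC_def, mul_ite]
    · by_cases hl2 : l = j
      · subst hl2
        have : ∑ m, A k m * B m l = (A * A.adjugate) k l := by
          rw [Matrix.mul_apply]
          refine Finset.sum_congr rfl fun m _ => ?_
          simp [hB_def, hl1]
        rw [this, Matrix.mul_adjugate, Matrix.smul_apply, Matrix.one_apply]
        simp [hC_def, hl1, mul_ite]
      · have : ∑ m, A k m * B m l = A k l := by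
          rw [Finset.sum_eq_single l]
          · simp [hB_def, hl1, hl2]
          · intro m _ hm
            simp [hB_def, hl1, hl2, hm]
          · simp
        rw [this]
        simp [hC_def, hl1, hl2]
  have hBdet : B.det = A.adjugate i i * A.adjugate j j - A.adjugate i j * A.adjugate j i := by
    have hsub : B.submatrix e e = Matrix.fromBlocks 1
        (Matrix.of fun (k : S) (p : Fin 2) => B k.val (f (Sum.inr p))) 0
        (Matrix.of fun (p q : Fin 2) => B (f (Sum.inr p)) (f (Sum.inr q))) := by
      ext a b
      rcases a with k | p <;> rcases b with l | q
      · simp only [Matrix.submatrix_apply, he, hfl, Matrix.fromBlocks_apply₁₁]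
        simp only [hB_def, Matrix.of_apply, if_neg l.2.1, if_neg l.2.2,
          Matrix.one_apply]
        by_cases hkl : k = l
        · simp [hkl]
        · rw [if_neg (fun h => hkl (Subtype.ext h)), if_neg hkl]
      · rfl
      · simp only [Matrix.submatrix_apply, he, hfl, Matrix.fromBlocks_apply₂₁,
          Matrix.zero_apply]
        rcases hfr p with hp | hp <;> rw [hp] <;>
          simp [hB_def, if_neg l.2.1, if_neg l.2.2, Ne.symm l.2.1, Ne.symm l.2.2]
      · rfl
    have h2 : (Matrix.of fun (p q : Fin 2) => B (f (Sum.inr p)) (f (Sum.inr q))).det =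
        A.adjugate i i * A.adjugate j j - A.adjugate i j * A.adjugate j i := by
      rw [Matrix.det_fin_two]
      simp only [Matrix.of_apply, hf0, hf1]
      simp [hB_def, hij, Ne.symm hij]
    rw [← Matrix.det_submatrix_equiv_self e B, hsub,
      Matrix.det_fromBlocks_zero₂₁, Matrix.det_one, one_mul, h2]
  have hCdet : C.det =
      (A.submatrix (fun k : S => k.val) (fun k : S => k.val)).det * (A.det * A.det) := by
    have hsub : C.submatrix e e = Matrix.fromBlocks
        (A.submatrix (fun k : S => k.val) (fun k : S => k.val)) 0
        (Matrix.of fun (p : Fin 2) (l : S) => C (f (Sum.inr p)) l.val)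
        (Matrix.of fun (p q : Fin 2) => C (f (Sum.inr p)) (f (Sum.inr q))) := by
      ext a b
      rcases a with k | p <;> rcases b with l | q
      · simp [Matrix.submatrix_apply, he, hfl, hC_def, l.2.1, l.2.2]
      · simp only [Matrix.submatrix_apply, he, hfl, Matrix.fromBlocks_apply₁₂,
          Matrix.zero_apply]
        rcases hfr q with hq | hq <;> rw [hq] <;>
          simp [hC_def, k.2.1, k.2.2, hij, Ne.symm hij]
      · rfl
      · rfl
    have h2 : (Matrix.of fun (p q : Fin 2) => C (f (Sum.inr p)) (f (Sum.inr q))).det =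
        A.det * A.det := by
      rw [Matrix.det_fin_two]
      simp only [Matrix.of_apply, hf0, hf1]
      simp [hC_def, hij, Ne.symm hij]
    rw [← Matrix.det_submatrix_equiv_self e C, hsub,
      Matrix.det_fromBlocks_zero₁₂, h2]
  calc A.det * (A.adjugate i i * A.adjugate j j - A.adjugate i j * A.adjugate j i)
      = A.det * B.det := by rw [hBdet]
    _ = (A * B).det := (Matrix.det_mul A B).symm
    _ = C.det := by rw [hAB]
    _ = _ := by rw [hCdet]; ring

private lemma jacobi_generic {n : ℕ} (i j : Fin n) (hij : i ≠ j) :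
    (Matrix.mvPolynomialX (Fin n) (Fin n) ℤ).adjugate i i *
        (Matrix.mvPolynomialX (Fin n) (Fin n) ℤ).adjugate j j -
      (Matrix.mvPolynomialX (Fin n) (Fin n) ℤ).adjugate i j *
        (Matrix.mvPolynomialX (Fin n) (Fin n) ℤ).adjugate j i =
      (Matrix.mvPolynomialX (Fin n) (Fin n) ℤ).det *
        ((Matrix.mvPolynomialX (Fin n) (Fin n) ℤ).submatrix
          (fun k : {k : Fin n // k ≠ i ∧ k ≠ j} => k.val)
          (fun k : {k : Fin n // k ≠ i ∧ k ≠ j} => k.val)).det := by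
  apply mul_left_cancel₀
    (show (Matrix.mvPolynomialX (Fin n) (Fin n) ℤ).det ≠ 0 from
      Matrix.det_mvPolynomialX_ne_zero (Fin n) ℤ)
  exact jacobi_aux _ i j hij

theorem jacobi_adjugate {R : Type*} [CommRing R] {n : ℕ} (hn : 2 ≤ n)
    (A : Matrix (Fin n) (Fin n) R) (i j : Fin n) (hij : i ≠ j) :
    A.adjugate i i * A.adjugate j j - A.adjugate i j * A.adjugate j i =
      A.det * (A.submatrix (fun k : {k : Fin n // k ≠ i ∧ k ≠ j} => k.val)
        (fun k : {k : Fin n // k ≠ i ∧ k ≠ j} => k.val)).det := by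
  set X := Matrix.mvPolynomialX (Fin n) (Fin n) ℤ with hX_def
  set φ := MvPolynomial.aeval (R := ℤ) fun p : Fin n × Fin n => A p.1 p.2 with hφ_def
  have hX : X.map φ = A := by
    rw [show X.map φ = φ.mapMatrix X from rfl, Matrix.mvPolynomialX_mapMatrix_aeval]
  have hadj : A.adjugate = (X.adjugate).map φ := by
    rw [← hX]
    have := AlgHom.map_adjugate φ X
    rw [AlgHom.mapMatrix_apply, AlgHom.mapMatrix_apply] at this
    exact this.symm
  have hdet : A.det = φ X.det := by
    rw [← hX]
    have := AlgHom.map_det φ X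
    rw [AlgHom.mapMatrix_apply] at this
    exact this.symm
  have hsub : (A.submatrix (fun k : {k : Fin n // k ≠ i ∧ k ≠ j} => k.val)
        (fun k : {k : Fin n // k ≠ i ∧ k ≠ j} => k.val)).det =
      φ ((X.submatrix (fun k : {k : Fin n // k ≠ i ∧ k ≠ j} => k.val)
        (fun k : {k : Fin n // k ≠ i ∧ k ≠ j} => k.val)).det) := by
    rw [← hX, Matrix.submatrix_map]
    have := AlgHom.map_det φ (X.submatrix (fun k : {k : Fin n // k ≠ i ∧ k ≠ j} => k.val)
        (fun k : {k : Fin n // k ≠ i ∧ k ≠ j} => k.val))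
    rw [AlgHom.mapMatrix_apply] at this
    exact this.symm
  rw [hadj, hdet, hsub]
  simp only [Matrix.map_apply]
  rw [← _root_.map_mul, ← _root_.map_mul, ← map_sub, ← _root_.map_mul]
  exact congrArg φ (jacobi_generic i j hij)
end

section
/- Let Ω be an antisymmetric n×n matrix over a field of characteristic ≠ 2 with n odd. Then for all indices i, j, the cofactor entries satisfy (adj(Ω)ᵢⱼ)² = adj(Ω)ᵢᵢ · adj(Ω)ⱼⱼ. -/
open Matrix

private lemma adjugate_rank_one_of_det_eq_zero {K : Type*} [Field K] {n : ℕ}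
    (A : Matrix (Fin (n + 1)) (Fin (n + 1)) K) (hdet : A.det = 0) (i j : Fin (n + 1)) :
    A.adjugate i i * A.adjugate j j = A.adjugate i j * A.adjugate j i := by
  by_cases hB : A.adjugate = 0
  · simp [hB]
  obtain ⟨k, l, hkl⟩ : ∃ k l, A.adjugate k l ≠ 0 := by
    by_contra h
    push_neg at h
    exact hB (by ext k l; simpa using h k l)
  set B := A.adjugate with hBdef
  have hAB : A * B = 0 := by rw [hBdef, mul_adjugate, hdet, zero_smul]
  -- columns of B lie in the kernel of mulVecLin A
  have hcol : ∀ q, A.mulVecLin (fun p => B p q) = 0 := by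
    intro q
    ext p
    have := congrFun (congrFun hAB p) q
    simpa [Matrix.mul_apply, Matrix.mulVec, dotProduct] using this
  set S : Submodule K (Fin (n + 1) → K) := LinearMap.ker A.mulVecLin with hS
  have hmem : ∀ q, (fun p => B p q) ∈ S := fun q => LinearMap.mem_ker.2 (hcol q)
  set v : Fin (n + 1) → K := fun p => B p l with hv
  have hv0 : v ≠ 0 := fun h => hkl (by simpa [hv] using congrFun h k)
  -- the submatrix corresponding to the nonzero cofactor is invertible
  have hM : (A.submatrix l.succAbove k.succAbove).det ≠ 0 := by
    intro h
    apply hkl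
    rw [hBdef, adjugate_fin_succ_eq_det_submatrix, h, mul_zero]
  -- columns of A indexed by k.succAbove are linearly independent
  set w : Fin n → (Fin (n + 1) → K) := fun q p => A p (k.succAbove q) with hw
  have hindep : LinearIndependent K w := by
    have hMunit : IsUnit (A.submatrix l.succAbove k.succAbove) :=
      (Matrix.isUnit_iff_isUnit_det _).2 (isUnit_iff_ne_zero.2 hM)
    have hcols : LinearIndependent K
        (fun q => (A.submatrix l.succAbove k.succAbove)ᵀ q) :=
      Matrix.linearIndependent_cols_iff_isUnit.2 hMunit
    have heq : (LinearMap.funLeft K K l.succAbove) ∘ w =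
        fun q => (A.submatrix l.succAbove k.succAbove)ᵀ q := by
      ext q p
      simp [hw, LinearMap.funLeft, Matrix.submatrix, Matrix.transpose]
    have : LinearIndependent K ((LinearMap.funLeft K K l.succAbove) ∘ w) := by
      rw [heq]; exact hcols
    exact LinearIndependent.of_comp _ this
  -- hence the range of mulVecLin A has dimension ≥ n
  have hwmem : ∀ q, w q ∈ LinearMap.range A.mulVecLin := by
    intro q
    refine ⟨Pi.single (k.succAbove q) 1, ?_⟩
    ext p
    simp [Matrix.mulVecLin_apply, Matrix.mulVec_single, hw]
  have hspanle : Submodule.span K (Set.range w) ≤ LinearMap.range A.mulVecLin := by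
    rw [Submodule.span_le]
    rintro x ⟨q, rfl⟩
    exact hwmem q
  have hrange : n ≤ Module.finrank K (LinearMap.range A.mulVecLin) := by
    have h1 : Module.finrank K (Submodule.span K (Set.range w)) = n := by
      rw [finrank_span_eq_card hindep, Fintype.card_fin]
    calc n = Module.finrank K (Submodule.span K (Set.range w)) := h1.symm
      _ ≤ Module.finrank K (LinearMap.range A.mulVecLin) := Submodule.finrank_mono hspanle
  -- rank-nullity gives finrank S ≤ 1
  have hrn : Module.finrank K (LinearMap.range A.mulVecLin) + Module.finrank K S = n + 1 := by
    rw [hS, LinearMap.finrank_range_add_finrank_ker]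
    simp
  have hSle : Module.finrank K S ≤ 1 := by omega
  -- S = span {v}
  have hvmem : v ∈ S := hmem l
  have hspanv : Submodule.span K {v} ≤ S := by
    rw [Submodule.span_le, Set.singleton_subset_iff]
    exact hvmem
  have hfv : Module.finrank K (Submodule.span K {v} : Submodule K (Fin (n + 1) → K)) = 1 :=
    finrank_span_singleton hv0
  have hSeq : Submodule.span K {v} = S :=
    Submodule.eq_of_le_of_finrank_le hspanv (by rw [hfv]; exact hSle)
  -- all columns of B are multiples of v
  have hc : ∀ q, ∃ c : K, (fun p => B p q) = c • v := by
    intro q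
    have : (fun p => B p q) ∈ Submodule.span K {v} := hSeq ▸ hmem q
    obtain ⟨c, hc⟩ := Submodule.mem_span_singleton.1 this
    exact ⟨c, hc.symm⟩
  obtain ⟨ci, hci⟩ := hc i
  obtain ⟨cj, hcj⟩ := hc j
  have hii : B i i = ci * v i := congrFun hci i
  have hji : B j i = ci * v j := congrFun hci j
  have hij : B i j = cj * v i := congrFun hcj i
  have hjj : B j j = cj * v j := congrFun hcj j
  rw [hii, hjj, hij, hji]
  ring

theorem adjugate_sq_skew_odd {K : Type*} [Field K] (hchar : (2 : K) ≠ 0) {n : ℕ}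
    (hn : Odd n) (Ω : Matrix (Fin n) (Fin n) K) (hΩ : Ωᵀ = -Ω) (i j : Fin n) :
    (Ω.adjugate i j) ^ 2 = Ω.adjugate i i * Ω.adjugate j j := by
  obtain ⟨m, rfl⟩ : ∃ m, n = m + 1 := by
    rcases n with _ | m
    · exact absurd hn (by simp)
    · exact ⟨m, rfl⟩
  -- det Ω = 0
  have hdet : Ω.det = 0 := by
    have h1 : Ω.det = -Ω.det := by
      conv_lhs => rw [← Matrix.det_transpose, hΩ, Matrix.det_neg]
      simp [hn.neg_one_pow]
    have h2 : (2 : K) * Ω.det = 0 := by linear_combination h1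
    rcases mul_eq_zero.1 h2 with h | h
    · exact absurd h hchar
    · exact h
  -- adjugate is symmetric
  have hsym : Ω.adjugate j i = Ω.adjugate i j := by
    have heven : Even m := by
      rcases hn with ⟨k, hk⟩; exact ⟨k, by omega⟩
    have h1 : (Ω.adjugate)ᵀ = Ω.adjugate := by
      rw [Matrix.adjugate_transpose, hΩ, show -Ω = (-1 : K) • Ω by simp,
        Matrix.adjugate_smul]
      simp [Fintype.card_fin, heven.neg_one_pow]
    have := congrFun (congrFun h1 j) i
    simpa [Matrix.transpose_apply] using this.symm
  have key := adjugate_rank_one_of_det_eq_zero Ω hdet i j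
  rw [pow_two, key, hsym]
end

section
/- Let Ω be a real antisymmetric matrix of odd order n. Then the adjugate adj(Ω) is a positive semidefinite symmetric matrix; in fact there exists a vector β ∈ ℝⁿ with adj(Ω) = β·βᵀ. -/
open Matrix Polynomial Filter Topology

section Helpers

variable {ι : Type*} [Fintype ι] [DecidableEq ι]

private lemma eval_det_add_smul_one' (A : Matrix ι ι ℝ) (t : ℝ) :
    ((-A).charpoly).eval t = (A + t • 1).det := by
  rw [Matrix.charpoly, eval_det, matPolyEquiv_eval_eq_map]
  congr 1
  ext i j
  by_cases h : i = j
  · subst h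
    simp [charmatrix_apply_eq, Matrix.one_apply, add_comm]
  · simp [charmatrix_apply_ne _ _ _ h, Matrix.one_apply_ne h]

private lemma eventually_isUnit_det' (A : Matrix ι ι ℝ) :
    ∀ᶠ t in 𝓝[≠] (0:ℝ), IsUnit (A + t • 1).det := by
  have hp : ((-A).charpoly) ≠ 0 := (Matrix.charpoly_monic _).ne_zero
  have hfin : Set.Finite {x : ℝ | ((-A).charpoly).IsRoot x} :=
    Polynomial.finite_setOf_isRoot hp
  have hfin' : Set.Finite ({x : ℝ | ((-A).charpoly).IsRoot x} \ {0}) := hfin.diff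
  have hcl : IsClosed ({x : ℝ | ((-A).charpoly).IsRoot x} \ {0}) := hfin'.isClosed
  have h0 : (0:ℝ) ∈ ({x : ℝ | ((-A).charpoly).IsRoot x} \ {0})ᶜ := by simp
  have hnb : ({x : ℝ | ((-A).charpoly).IsRoot x} \ {0})ᶜ ∈ 𝓝 (0:ℝ) :=
    hcl.isOpen_compl.mem_nhds h0
  filter_upwards [nhdsWithin_le_nhds hnb, self_mem_nhdsWithin] with t ht ht0
  have : ¬ ((-A).charpoly).IsRoot t := by
    intro hr
    exact ht ⟨hr, ht0⟩
  rw [isUnit_iff_ne_zero]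
  intro hdet
  exact this (by rwa [IsRoot, eval_det_add_smul_one'])

private lemma eq_at_zero_of_eventually' {f g : ℝ → ℝ} (hf : Continuous f) (hg : Continuous g)
    (h : ∀ᶠ t in 𝓝[≠] (0:ℝ), f t = g t) : f 0 = g 0 := by
  have h1 : Tendsto f (𝓝[≠] (0:ℝ)) (𝓝 (f 0)) := (hf.tendsto 0).mono_left nhdsWithin_le_nhds
  have h2 : Tendsto f (𝓝[≠] (0:ℝ)) (𝓝 (g 0)) :=
    ((hg.tendsto 0).mono_left nhdsWithin_le_nhds).congr' (h.mono fun t ht => ht.symm)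
  exact tendsto_nhds_unique h1 h2

private lemma continuous_perturb' (A : Matrix ι ι ℝ) :
    Continuous (fun t : ℝ => A + t • (1 : Matrix ι ι ℝ)) := by
  apply continuous_matrix
  intro i j
  simp only [Matrix.add_apply, Matrix.smul_apply, smul_eq_mul]
  exact continuous_const.add (continuous_id.mul continuous_const)

private lemma skew_det_nonneg' (A : Matrix ι ι ℝ) (h : Aᵀ = -A) : 0 ≤ A.det := by
  cases isEmpty_or_nonempty ι with
  | inl he => simp [Matrix.det_isEmpty]
  | inr hne =>
  set f : ℝ → ℝ := fun t => (A + t • 1).det with hfdef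
  have hf : Continuous f := (continuous_perturb' A).matrix_det
  have hskew : ∀ v : ι → ℝ, v ⬝ᵥ A *ᵥ v = 0 := by
    intro v
    have h1 : v ⬝ᵥ A *ᵥ v = (Aᵀ *ᵥ v) ⬝ᵥ v := by
      rw [Matrix.dotProduct_mulVec, ← Matrix.mulVec_transpose]
    have h2 : (Aᵀ *ᵥ v) ⬝ᵥ v = -(v ⬝ᵥ A *ᵥ v) := by
      rw [h, Matrix.neg_mulVec, neg_dotProduct, dotProduct_comm]
    linarith [h1, h2 ▸ h1]
  have hne0 : ∀ t : ℝ, 0 < t → f t ≠ 0 := by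
    intro t ht hdet
    obtain ⟨v, hv, hmv⟩ := (Matrix.exists_mulVec_eq_zero_iff).mpr hdet
    have : v ⬝ᵥ ((A + t • 1) *ᵥ v) = t * (v ⬝ᵥ v) := by
      rw [Matrix.add_mulVec, Matrix.smul_mulVec, Matrix.one_mulVec,
        dotProduct_add, hskew v, zero_add, dotProduct_smul, smul_eq_mul]
    rw [hmv, dotProduct_zero] at this
    have hv0 : v ⬝ᵥ v = 0 := by
      rcases mul_eq_zero.mp this.symm with h' | h'
      · exact absurd h' ht.ne'
      · exact h'
    exact hv (dotProduct_self_eq_zero.mp hv0)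
  have htop : Tendsto f atTop atTop := by
    have heq : f = fun t => ((-A).charpoly).eval t := by
      funext t; rw [eval_det_add_smul_one']
    rw [heq]
    apply Polynomial.tendsto_atTop_of_leadingCoeff_nonneg
    · rw [Matrix.charpoly_degree_eq_dim]
      exact_mod_cast Fintype.card_pos
    · rw [(Matrix.charpoly_monic _).leadingCoeff]; norm_num
  have hpos : ∀ t : ℝ, 0 < t → 0 < f t := by
    intro t ht
    by_contra hle
    push_neg at hle
    have hlt : f t < 0 := lt_of_le_of_ne hle (hne0 t ht)
    obtain ⟨T, hT1, hT2⟩ := ((htop.eventually_gt_atTop 0).and (eventually_ge_atTop t)).exists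
    have : (0:ℝ) ∈ Set.Icc (f t) (f T) := ⟨hlt.le, hT1.le⟩
    obtain ⟨c, hc, hfc⟩ := intermediate_value_Icc hT2 hf.continuousOn this
    exact hne0 c (lt_of_lt_of_le ht hc.1) hfc
  have h0 : f 0 = A.det := by simp [hfdef]
  rw [← h0]
  have htend : Tendsto f (𝓝[>] (0:ℝ)) (𝓝 (f 0)) :=
    (hf.tendsto 0).mono_left nhdsWithin_le_nhds
  refine ge_of_tendsto htend ?_
  filter_upwards [self_mem_nhdsWithin] with t ht
  exact (hpos t ht).le

private lemma mul3_apply' {a b : Type*} [Fintype a] [Fintype b]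
    (R : Matrix a ι ℝ) (N : Matrix ι ι ℝ) (C : Matrix ι b ℝ) (i : a) (j : b) :
    (R * N * C) i j = R i ⬝ᵥ N *ᵥ (fun k => C k j) := by
  rw [Matrix.mul_assoc]
  simp [Matrix.mul_apply, Matrix.mulVec, dotProduct, Finset.mul_sum]

private lemma bordered1_isUnit' (A : Matrix ι ι ℝ) (x : ι → ℝ) (h : IsUnit A.det) :
    (fromBlocks A (Matrix.of fun i (_ : Unit) => x i)
      (Matrix.of fun (_ : Unit) j => -x j) 0).det = x ⬝ᵥ A.adjugate *ᵥ x := by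
  letI := A.invertibleOfIsUnitDet h
  set B : Matrix ι Unit ℝ := Matrix.of fun i (_ : Unit) => x i with hB
  set Cm : Matrix Unit ι ℝ := Matrix.of fun (_ : Unit) j => -x j with hCm
  rw [det_fromBlocks₁₁, invOf_eq_nonsing_inv,
    Matrix.det_unique ((0 : Matrix Unit Unit ℝ) - Cm * A⁻¹ * B)]
  have hentry : ((0 : Matrix Unit Unit ℝ) - Cm * A⁻¹ * B) default default
      = x ⬝ᵥ A⁻¹ *ᵥ x := by
    rw [Matrix.sub_apply, mul3_apply']
    have h1 : Cm default = -x := rfl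
    have h2 : (fun k => B k default) = x := rfl
    rw [h1, h2, neg_dotProduct]
    simp
  rw [hentry, Matrix.inv_def, Ring.inverse_eq_inv', Matrix.smul_mulVec,
    dotProduct_smul, smul_eq_mul]
  have hd : A.det ≠ 0 := h.ne_zero
  field_simp

private lemma bordered2_isUnit' (A : Matrix ι ι ℝ) (x y : ι → ℝ) (h : IsUnit A.det) :
    A.det * (fromBlocks A (Matrix.of fun i (k : Fin 2) => ![x i, y i] k)
      (Matrix.of fun (k : Fin 2) j => ![x j, y j] k) 0).det
      = (x ⬝ᵥ A.adjugate *ᵥ x) * (y ⬝ᵥ A.adjugate *ᵥ y)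
        - (x ⬝ᵥ A.adjugate *ᵥ y) * (y ⬝ᵥ A.adjugate *ᵥ x) := by
  letI := A.invertibleOfIsUnitDet h
  rw [det_fromBlocks₁₁, invOf_eq_nonsing_inv]
  have hd : A.det ≠ 0 := h.ne_zero
  set R : Matrix (Fin 2) ι ℝ := Matrix.of fun (k : Fin 2) j => ![x j, y j] k with hR
  set C : Matrix ι (Fin 2) ℝ := Matrix.of fun i (k : Fin 2) => ![x i, y i] k with hC
  have hM : ∀ k l : Fin 2, (R * A⁻¹ * C) k l
      = A.det⁻¹ * ((fun j => R k j) ⬝ᵥ A.adjugate *ᵥ (fun i => C i l)) := by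
    intro k l
    rw [mul3_apply', Matrix.inv_def, Ring.inverse_eq_inv', Matrix.smul_mulVec,
      dotProduct_smul, smul_eq_mul]
  rw [Matrix.det_fin_two]
  simp only [Matrix.sub_apply, Matrix.zero_apply, zero_sub, neg_mul, neg_neg, mul_neg]
  rw [hM 0 0, hM 1 1, hM 0 1, hM 1 0]
  have e00 : (fun j => R 0 j) = x := by funext j; simp [hR]
  have e01 : (fun j => R 1 j) = y := by funext j; simp [hR]
  have e10 : (fun i => C i 0) = x := by funext i; simp [hC]
  have e11 : (fun i => C i 1) = y := by funext i; simp [hC]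
  rw [e00, e01, e10, e11]
  field_simp

private lemma continuous_fromBlocks_perturb' {b : Type*} [Fintype b] [DecidableEq b]
    (A : Matrix ι ι ℝ) (B : Matrix ι b ℝ) (C : Matrix b ι ℝ) :
    Continuous (fun t : ℝ => fromBlocks (A + t • 1) B C (0 : Matrix b b ℝ)) := by
  apply continuous_matrix
  rintro (i | i) (j | j)
  · simp only [fromBlocks_apply₁₁, Matrix.add_apply, Matrix.smul_apply, smul_eq_mul]
    exact continuous_const.add (continuous_id.mul continuous_const)
  · simp only [fromBlocks_apply₁₂]; exact continuous_const
  · simp only [fromBlocks_apply₂₁]; exact continuous_const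
  · simp only [fromBlocks_apply₂₂]; exact continuous_const

private lemma bordered1' (A : Matrix ι ι ℝ) (x : ι → ℝ) :
    (fromBlocks A (Matrix.of fun i (_ : Unit) => x i)
      (Matrix.of fun (_ : Unit) j => -x j) 0).det = x ⬝ᵥ A.adjugate *ᵥ x := by
  have key := eq_at_zero_of_eventually'
    (f := fun t => (fromBlocks (A + t • 1) (Matrix.of fun i (_ : Unit) => x i)
      (Matrix.of fun (_ : Unit) j => -x j) 0).det)
    (g := fun t => x ⬝ᵥ (A + t • 1).adjugate *ᵥ x)
    ((continuous_fromBlocks_perturb' A _ _).matrix_det)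
    (continuous_const.dotProduct
      (((continuous_perturb' A).matrix_adjugate).matrix_mulVec continuous_const))
    (by
      filter_upwards [eventually_isUnit_det' A] with t ht
      exact bordered1_isUnit' (A + t • 1) x ht)
  simpa using key

private lemma bordered2' (A : Matrix ι ι ℝ) (x y : ι → ℝ) :
    A.det * (fromBlocks A (Matrix.of fun i (k : Fin 2) => ![x i, y i] k)
      (Matrix.of fun (k : Fin 2) j => ![x j, y j] k) 0).det
      = (x ⬝ᵥ A.adjugate *ᵥ x) * (y ⬝ᵥ A.adjugate *ᵥ y)
        - (x ⬝ᵥ A.adjugate *ᵥ y) * (y ⬝ᵥ A.adjugate *ᵥ x) := by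
  have key := eq_at_zero_of_eventually'
    (f := fun t => (A + t • 1).det * (fromBlocks (A + t • 1)
      (Matrix.of fun i (k : Fin 2) => ![x i, y i] k)
      (Matrix.of fun (k : Fin 2) j => ![x j, y j] k) 0).det)
    (g := fun t => (x ⬝ᵥ (A + t • 1).adjugate *ᵥ x) * (y ⬝ᵥ (A + t • 1).adjugate *ᵥ y)
        - (x ⬝ᵥ (A + t • 1).adjugate *ᵥ y) * (y ⬝ᵥ (A + t • 1).adjugate *ᵥ x))
    (((continuous_perturb' A).matrix_det).mul
      ((continuous_fromBlocks_perturb' A _ _).matrix_det))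
    (by
      have hadj : Continuous fun t : ℝ => (A + t • 1).adjugate :=
        (continuous_perturb' A).matrix_adjugate
      exact ((continuous_const.dotProduct (hadj.matrix_mulVec continuous_const)).mul
        (continuous_const.dotProduct (hadj.matrix_mulVec continuous_const))).sub
        ((continuous_const.dotProduct (hadj.matrix_mulVec continuous_const)).mul
        (continuous_const.dotProduct (hadj.matrix_mulVec continuous_const))))
    (by
      filter_upwards [eventually_isUnit_det' A] with t ht
      exact bordered2_isUnit' (A + t • 1) x y ht)
  simpa using key

end Helpers

theorem adjugate_skew_odd_posSemidef {n : ℕ} (hn : Odd n)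
    (Ω : Matrix (Fin n) (Fin n) ℝ) (hΩ : Ωᵀ = -Ω) :
    (Ω.adjugate).PosSemidef ∧ ∃ β : Fin n → ℝ, Ω.adjugate = vecMulVec β β := by
  set A := Ω.adjugate with hAdef
  have hω : ∀ i j, Ω j i = -Ω i j := by
    intro i j
    have := congrFun (congrFun hΩ i) j
    simpa using this
  -- det Ω = 0
  have hdet : Ω.det = 0 := by
    have h1 : Ω.det = (-Ω).det := by rw [← hΩ, Matrix.det_transpose]
    rw [Matrix.det_neg, Fintype.card_fin, hn.neg_one_pow] at h1
    linarith
  -- symmetry of the adjugate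
  have hsym : Aᵀ = A := by
    rw [hAdef, Matrix.adjugate_transpose, hΩ]
    have h1 : (-Ω) = (-1 : ℝ) • Ω := by simp
    rw [h1, Matrix.adjugate_smul]
    have he : Even (n - 1) := Nat.Odd.sub_odd hn odd_one
    rw [Fintype.card_fin, he.neg_one_pow, one_smul]
  have hsym' : ∀ p q, A p q = A q p := by
    intro p q
    have := congrFun (congrFun hsym q) p
    simpa using this
  -- the quadratic form is nonnegative
  have hQ : ∀ x : Fin n → ℝ, 0 ≤ x ⬝ᵥ A *ᵥ x := by
    intro x
    rw [hAdef, ← bordered1' Ω x]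
    apply skew_det_nonneg'
    ext (i | i) (j | j)
    · simp [Matrix.transpose_apply, hω i j]
    · simp [Matrix.transpose_apply]
    · simp [Matrix.transpose_apply]
    · simp [Matrix.transpose_apply]
  -- rank-one identity
  have hrank : ∀ x y : Fin n → ℝ,
      (x ⬝ᵥ A *ᵥ x) * (y ⬝ᵥ A *ᵥ y) = (x ⬝ᵥ A *ᵥ y) * (y ⬝ᵥ A *ᵥ x) := by
    intro x y
    have h1 := bordered2' Ω x y
    rw [hdet, zero_mul] at h1
    rw [hAdef]
    linarith
  -- entry computations
  have hentry : ∀ k l, (Pi.single k 1 : Fin n → ℝ) ⬝ᵥ A *ᵥ (Pi.single l 1) = A k l := by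
    intro k l
    rw [Matrix.mulVec_single, single_dotProduct]
    simp
  by_cases hA0 : A = 0
  · refine ⟨?_, 0, ?_⟩
    · rw [hA0]; exact Matrix.PosSemidef.zero
    · rw [hA0]; ext i j; simp [Matrix.vecMulVec_apply]
  · -- find a positive diagonal entry
    have hex : ∃ i j, A i j ≠ 0 := by
      by_contra hcon
      push_neg at hcon
      exact hA0 (by ext i j; simpa using hcon i j)
    obtain ⟨i, j, hij⟩ := hex
    have hprod : A i i * A j j = A i j * A i j := by
      have h1 := hrank (Pi.single i 1) (Pi.single j 1)
      rw [hentry, hentry, hentry, hentry] at h1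
      rw [h1, hsym' j i]
    have hii0 : A i i ≠ 0 := by
      intro h0
      rw [h0, zero_mul] at hprod
      exact hij (by nlinarith)
    have hiiQ : 0 ≤ A i i := by
      have := hQ (Pi.single i 1)
      rwa [hentry] at this
    have hii : 0 < A i i := lt_of_le_of_ne hiiQ (Ne.symm hii0)
    -- the key multiplicative identity
    have hkey : ∀ p q, A i i * A p q = A i p * A i q := by
      intro p q
      have h1 := hrank (Pi.single i 1) (Pi.single p 1 + Pi.single q 1)
      have h2 := hrank (Pi.single i 1) (Pi.single p 1 - Pi.single q 1)
      have e1 : (Pi.single i 1 : Fin n → ℝ) ⬝ᵥ A *ᵥ (Pi.single p 1 + Pi.single q 1)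
          = A i p + A i q := by
        rw [Matrix.mulVec_add, dotProduct_add, hentry, hentry]
      have e2 : (Pi.single p 1 + Pi.single q 1 : Fin n → ℝ) ⬝ᵥ A *ᵥ (Pi.single i 1)
          = A p i + A q i := by
        rw [add_dotProduct, hentry, hentry]
      have e3 : (Pi.single p 1 + Pi.single q 1 : Fin n → ℝ) ⬝ᵥ A *ᵥ
            (Pi.single p 1 + Pi.single q 1) = A p p + A p q + A q p + A q q := by
        rw [Matrix.mulVec_add, dotProduct_add, add_dotProduct,
          add_dotProduct, hentry, hentry, hentry, hentry]
        ring
      have f1 : (Pi.single i 1 : Fin n → ℝ) ⬝ᵥ A *ᵥ (Pi.single p 1 - Pi.single q 1)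
          = A i p - A i q := by
        rw [Matrix.mulVec_sub, dotProduct_sub, hentry, hentry]
      have f2 : (Pi.single p 1 - Pi.single q 1 : Fin n → ℝ) ⬝ᵥ A *ᵥ (Pi.single i 1)
          = A p i - A q i := by
        rw [sub_dotProduct, hentry, hentry]
      have f3 : (Pi.single p 1 - Pi.single q 1 : Fin n → ℝ) ⬝ᵥ A *ᵥ
            (Pi.single p 1 - Pi.single q 1) = A p p - A p q - A q p + A q q := by
        rw [Matrix.mulVec_sub, dotProduct_sub, sub_dotProduct,
          sub_dotProduct, hentry, hentry, hentry, hentry]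
        ring
      rw [hentry, e1, e2, e3] at h1
      rw [hentry, f1, f2, f3] at h2
      rw [hsym' p i, hsym' q i] at h1 h2
      rw [hsym' q p] at h1 h2
      linarith [h1, h2]
    -- construct β
    set s := Real.sqrt (A i i) with hs
    have hs2 : s * s = A i i := Real.mul_self_sqrt hii.le
    have hsne : s ≠ 0 := (Real.sqrt_pos.mpr hii).ne'
    have hvec : A = vecMulVec (fun p => A i p / s) (fun p => A i p / s) := by
      ext p q
      rw [Matrix.vecMulVec_apply, div_mul_div_comm, hs2, eq_div_iff hii0]
      linarith [hkey p q]
    refine ⟨?_, fun p => A i p / s, hvec⟩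
    constructor
    · show Aᴴ = A
      rw [Matrix.conjTranspose_eq_transpose_of_trivial, hsym]
    · intro x
      have := hQ ⇑x
      simpa [dotProduct, mulVec, Finsupp.sum_fintype, Finset.mul_sum, mul_assoc] using this
end

section
/- Let Ω be a real antisymmetric matrix of odd order n with rank(Ω) = n − 1. Then rank(adj(Ω)) = 1, adj(Ω) is symmetric positive semidefinite, and for any X ∈ ℝⁿ one has √(Xᵀ·adj(Ω)·X) = |Xᵀβ| where β ∈ ℝⁿ satisfies adj(Ω) = β·βᵀ. -/
open Matrix

/-- Sign constancy: a continuous function nonvanishing on `[a,b]` that is positive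
at `a` is positive at `b`. -/
lemma pos_of_pos_of_ne_zero {f : ℝ → ℝ} {a b : ℝ} (hab : a ≤ b) (hf : Continuous f)
    (hne : ∀ t ∈ Set.Icc a b, f t ≠ 0) (ha : 0 < f a) : 0 < f b := by
  by_contra hb
  push_neg at hb
  have hb' : f b < 0 := lt_of_le_of_ne hb (hne b ⟨hab, le_rfl⟩)
  have : (0 : ℝ) ∈ Set.Icc (f b) (f a) := ⟨hb'.le, ha.le⟩
  obtain ⟨c, hc, hfc⟩ := intermediate_value_Icc' hab hf.continuousOn this
  exact hne c hc hfc

/-- Sign constancy, other direction. -/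
lemma pos_of_pos_of_ne_zero' {f : ℝ → ℝ} {a b : ℝ} (hab : a ≤ b) (hf : Continuous f)
    (hne : ∀ t ∈ Set.Icc a b, f t ≠ 0) (hb : 0 < f b) : 0 < f a := by
  by_contra ha
  push_neg at ha
  have ha' : f a < 0 := lt_of_le_of_ne ha (hne a ⟨le_rfl, hab⟩)
  have : (0 : ℝ) ∈ Set.Icc (f a) (f b) := ⟨ha'.le, hb.le⟩
  obtain ⟨c, hc, hfc⟩ := intermediate_value_Icc hab hf.continuousOn this
  exact hne c hc hfc

lemma vecMulVec_mulVec {n : ℕ} (a b x : Fin n → ℝ) :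
    vecMulVec a b *ᵥ x = (b ⬝ᵥ x) • a := by
  funext i
  simp [vecMulVec_apply, mulVec, dotProduct, Finset.mul_sum, mul_comm, mul_left_comm,
    Finset.sum_mul]

lemma dot_vecMulVec {n : ℕ} (a b x y : Fin n → ℝ) :
    x ⬝ᵥ (vecMulVec a b *ᵥ y) = (x ⬝ᵥ a) * (b ⬝ᵥ y) := by
  rw [vecMulVec_mulVec, dotProduct_smul, smul_eq_mul, mul_comm]

lemma dotProduct_self_nonneg {n : ℕ} (x : Fin n → ℝ) : 0 ≤ x ⬝ᵥ x :=
  Finset.sum_nonneg fun i _ => mul_self_nonneg (x i)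

lemma skew_quad {n : ℕ} {Ω : Matrix (Fin n) (Fin n) ℝ} (hΩ : Ωᵀ = -Ω) (x : Fin n → ℝ) :
    x ⬝ᵥ (Ω *ᵥ x) = 0 := by
  have h3 : x ⬝ᵥ (Ω *ᵥ x) = -(x ⬝ᵥ (Ω *ᵥ x)) := by
    calc x ⬝ᵥ (Ω *ᵥ x) = (x ᵥ* Ω) ⬝ᵥ x := dotProduct_mulVec _ _ _
    _ = (Ωᵀ *ᵥ x) ⬝ᵥ x := by rw [mulVec_transpose]
    _ = -((Ω *ᵥ x) ⬝ᵥ x) := by rw [hΩ, neg_mulVec, neg_dotProduct]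
    _ = -(x ⬝ᵥ (Ω *ᵥ x)) := by rw [dotProduct_comm]
  linarith

/-- A matrix with injective `mulVec` (at zero) has nonzero determinant. -/
lemma det_ne_zero_of_ker {n : ℕ} {A : Matrix (Fin n) (Fin n) ℝ}
    (h : ∀ x, A *ᵥ x = 0 → x = 0) : A.det ≠ 0 := by
  intro hdet
  obtain ⟨v, hv, hAv⟩ := (Matrix.exists_mulVec_eq_zero_iff).2 hdet
  exact hv (h v hAv)

theorem adjugate_skew_odd_rank_one {n : ℕ} (hn : Odd n)
    (Ω : Matrix (Fin n) (Fin n) ℝ) (hΩ : Ωᵀ = -Ω) (hrank : Ω.rank = n - 1) :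
    (Ω.adjugate).rank = 1 ∧ (Ω.adjugate).PosSemidef ∧
      ∃ β : Fin n → ℝ, Ω.adjugate = vecMulVec β β ∧
        ∀ X : Fin n → ℝ, Real.sqrt (X ⬝ᵥ (Ω.adjugate).mulVec X) = |X ⬝ᵥ β| := by
  have hn1 : 1 ≤ n := hn.pos
  -- the determinant vanishes
  have hdet : Ω.det = 0 := by
    have h1 : Ω.det = (-Ω).det := by rw [← hΩ, det_transpose]
    rw [det_neg, Fintype.card_fin, hn.neg_one_pow] at h1
    linarith
  -- the kernel is one-dimensional
  have hker1 : Module.finrank ℝ (LinearMap.ker Ω.mulVecLin) = 1 := by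
    have h2 := LinearMap.finrank_range_add_finrank_ker Ω.mulVecLin
    rw [Module.finrank_fintype_fun_eq_card, Fintype.card_fin] at h2
    have hr : Module.finrank ℝ (LinearMap.range Ω.mulVecLin) = n - 1 := hrank
    omega
  obtain ⟨⟨v, hvmem⟩, hv0, hspan⟩ := finrank_eq_one_iff'.mp hker1
  have hv : Ω *ᵥ v = 0 := hvmem
  have hv0' : v ≠ 0 := fun h => hv0 (by simp [Subtype.ext_iff, h])
  have hker : ∀ x : Fin n → ℝ, Ω *ᵥ x = 0 → ∃ c : ℝ, x = c • v := by
    intro x hx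
    obtain ⟨c, hc⟩ := hspan ⟨x, hx⟩
    exact ⟨c, by simpa [Subtype.ext_iff, eq_comm] using hc⟩
  have hvv : (0 : ℝ) < v ⬝ᵥ v := by
    rcases lt_or_eq_of_le (dotProduct_self_nonneg v) with h | h
    · exact h
    · exact absurd (dotProduct_self_eq_zero.mp h.symm) hv0'
  -- columns of the adjugate lie in the kernel
  have hmul : Ω * Ω.adjugate = 0 := by rw [mul_adjugate, hdet, zero_smul]
  have hcol : ∀ j, ∃ c : ℝ, (fun i => Ω.adjugate i j) = c • v := by
    intro j
    apply hker
    funext i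
    have h3 := congrFun (congrFun hmul i) j
    simpa [Matrix.mul_apply, mulVec, dotProduct] using h3
  choose c hc using hcol
  have hadj : ∀ i j, Ω.adjugate i j = c j * v i := by
    intro i j
    have := congrFun (hc j) i
    simpa using this
  -- the adjugate is symmetric
  have hsymm : Ω.adjugateᵀ = Ω.adjugate := by
    have he : Even (n - 1) := Nat.Odd.sub_odd hn odd_one
    rw [adjugate_transpose, hΩ, show -Ω = (-1 : ℝ) • Ω by simp, adjugate_smul,
      Fintype.card_fin, he.neg_one_pow, one_smul]
  obtain ⟨i₀, hvi₀⟩ := Function.ne_iff.mp hv0'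
  have hvi₀ : v i₀ ≠ 0 := by simpa using hvi₀
  set d : ℝ := c i₀ / v i₀ with hd
  have hcd : ∀ j, c j = d * v j := by
    intro j
    have h4 : Ω.adjugate j i₀ = Ω.adjugate i₀ j := by
      conv_lhs => rw [← hsymm]
      rfl
    rw [hadj, hadj] at h4
    rw [hd, div_mul_eq_mul_div, eq_div_iff hvi₀]
    linarith [h4]
  have hadj2 : Ω.adjugate = d • vecMulVec v v := by
    ext i j
    rw [hadj, hcd j]
    simp [vecMulVec_apply]
    ring
  -- the matrix B = Ω + v vᵀ has positive determinant
  set B : Matrix (Fin n) (Fin n) ℝ := Ω + vecMulVec v v with hB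
  have hquadB : ∀ x : Fin n → ℝ, x ⬝ᵥ (B *ᵥ x) = (v ⬝ᵥ x) ^ 2 := by
    intro x
    rw [hB, add_mulVec, dotProduct_add, skew_quad hΩ, dot_vecMulVec,
      dotProduct_comm x v]
    ring
  have hgcont : Continuous fun s : ℝ => ((1 : Matrix (Fin n) (Fin n) ℝ) + s • B).det :=
    (continuous_const.add (continuous_id.smul continuous_const)).matrix_det
  have hgne : ∀ s ∈ Set.Icc (0 : ℝ) 1, ((1 : Matrix (Fin n) (Fin n) ℝ) + s • B).det ≠ 0 := by
    intro s hs
    apply det_ne_zero_of_ker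
    intro x hx
    have h5 : x ⬝ᵥ (((1 : Matrix (Fin n) (Fin n) ℝ) + s • B) *ᵥ x) = 0 := by rw [hx, dotProduct_zero]
    rw [add_mulVec, one_mulVec, smul_mulVec, dotProduct_add, dotProduct_smul,
      smul_eq_mul, hquadB] at h5
    have hx2 : x ⬝ᵥ x = 0 := by nlinarith [dotProduct_self_nonneg x, sq_nonneg (v ⬝ᵥ x), hs.1]
    exact dotProduct_self_eq_zero.mp hx2
  have hg1 : 0 < ((1 : Matrix (Fin n) (Fin n) ℝ) + (1 : ℝ) • B).det :=
    pos_of_pos_of_ne_zero zero_le_one hgcont hgne (by simp)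
  have hhcont : Continuous fun t : ℝ => (B + t • (1 : Matrix (Fin n) (Fin n) ℝ)).det :=
    (continuous_const.add (continuous_id.smul continuous_const)).matrix_det
  have hhne : ∀ t ∈ Set.Icc (0 : ℝ) 1, (B + t • (1 : Matrix (Fin n) (Fin n) ℝ)).det ≠ 0 := by
    intro t ht
    apply det_ne_zero_of_ker
    intro x hx
    have h5 : x ⬝ᵥ ((B + t • (1 : Matrix (Fin n) (Fin n) ℝ)) *ᵥ x) = 0 := by
      rw [hx, dotProduct_zero]
    rw [add_mulVec, smul_mulVec, one_mulVec, dotProduct_add, dotProduct_smul,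
      smul_eq_mul, hquadB] at h5
    have hvx : v ⬝ᵥ x = 0 := by nlinarith [dotProduct_self_nonneg x, sq_nonneg (v ⬝ᵥ x), ht.1]
    have htx : t * (x ⬝ᵥ x) = 0 := by nlinarith [sq_nonneg (v ⬝ᵥ x)]
    rcases eq_or_ne (x ⬝ᵥ x) 0 with h6 | h6
    · exact dotProduct_self_eq_zero.mp h6
    · have ht0 : t = 0 := by
        rcases mul_eq_zero.mp htx with h | h
        · exact h
        · exact absurd h h6
      rw [ht0, zero_smul, add_zero, hB, add_mulVec, vecMulVec_mulVec, hvx, zero_smul,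
        add_zero] at hx
      obtain ⟨a, ha⟩ := hker x hx
      rw [ha, dotProduct_smul, smul_eq_mul] at hvx
      rcases mul_eq_zero.mp hvx with h | h
      · rw [ha, h, zero_smul]
      · exact absurd h (ne_of_gt hvv)
  have hdetB : 0 < B.det := by
    have h7 : 0 < (B + (1 : ℝ) • (1 : Matrix (Fin n) (Fin n) ℝ)).det := by
      rw [one_smul, add_comm]
      rw [one_smul] at hg1
      exact hg1
    have h8 := pos_of_pos_of_ne_zero' zero_le_one hhcont hhne h7
    simpa using h8
  -- the matrix determinant lemma at the singular matrix Ω, by continuity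
  have hkey : B.det = v ⬝ᵥ (Ω.adjugate *ᵥ v) := by
    set F : ℝ → ℝ := fun t => ((Ω + t • (1 : Matrix (Fin n) (Fin n) ℝ)) + vecMulVec v v).det
      with hF
    set G : ℝ → ℝ := fun t => (Ω + t • (1 : Matrix (Fin n) (Fin n) ℝ)).det
      + v ⬝ᵥ ((Ω + t • (1 : Matrix (Fin n) (Fin n) ℝ)).adjugate *ᵥ v) with hG
    have hAc : Continuous fun t : ℝ => Ω + t • (1 : Matrix (Fin n) (Fin n) ℝ) :=
      continuous_const.add (continuous_id.smul continuous_const)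
    have hFc : Continuous F := (hAc.add continuous_const).matrix_det
    have hGc : Continuous G :=
      hAc.matrix_det.add (continuous_const.dotProduct
        (hAc.matrix_adjugate.matrix_mulVec continuous_const))
    have hEq : Set.EqOn F G {(0 : ℝ)}ᶜ := by
      intro t ht
      have ht0 : t ≠ 0 := ht
      set A : Matrix (Fin n) (Fin n) ℝ := Ω + t • (1 : Matrix (Fin n) (Fin n) ℝ) with hA
      have hAdet : A.det ≠ 0 := by
        apply det_ne_zero_of_ker
        intro x hx
        have h5 : x ⬝ᵥ (A *ᵥ x) = 0 := by rw [hx, dotProduct_zero]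
        rw [hA, add_mulVec, smul_mulVec, one_mulVec, dotProduct_add, dotProduct_smul,
          smul_eq_mul, skew_quad hΩ, zero_add] at h5
        rcases mul_eq_zero.mp h5 with h | h
        · exact absurd h ht0
        · exact dotProduct_self_eq_zero.mp h
      have hAu : IsUnit A.det := isUnit_iff_ne_zero.mpr hAdet
      have hdl : (A + replicateCol (Fin 1) v * replicateRow (Fin 1) v).det
          = A.det * (1 + replicateRow (Fin 1) v * A⁻¹ * replicateCol (Fin 1) v).det :=
        det_add_replicateCol_mul_replicateRow (ι := Fin 1) hAu v v
      have hcr : A + replicateCol (Fin 1) v * replicateRow (Fin 1) v = A + vecMulVec v v := by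
        rw [vecMulVec_eq (Fin 1)]; rfl
      have h11 : (replicateRow (Fin 1) v * A⁻¹ * replicateCol (Fin 1) v) 0 0
          = v ⬝ᵥ (A⁻¹ *ᵥ v) := by
        simp only [Matrix.mul_apply, Matrix.replicateRow, Matrix.replicateCol, mulVec, dotProduct,
          Matrix.of_apply, Finset.sum_mul, Finset.mul_sum]
        rw [Finset.sum_comm]
        exact Finset.sum_congr rfl fun x _ => Finset.sum_congr rfl fun i _ => by ring
      have h12 : v ⬝ᵥ (A.adjugate *ᵥ v) = A.det * (v ⬝ᵥ (A⁻¹ *ᵥ v)) := by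
        rw [inv_def, Ring.inverse_eq_inv, smul_mulVec, dotProduct_smul, smul_eq_mul]
        field_simp
      show F t = G t
      simp only [hF, hG]
      rw [← hA, ← hcr, hdl, h12]
      have h13 : ((1 : Matrix (Fin 1) (Fin 1) ℝ) + replicateRow (Fin 1) v * A⁻¹ * replicateCol (Fin 1) v).det
          = 1 + v ⬝ᵥ (A⁻¹ *ᵥ v) := by
        rw [det_fin_one, Matrix.add_apply, Matrix.one_apply_eq, h11]
      have h14 : A.det * ((1 : Matrix (Fin 1) (Fin 1) ℝ)
            + replicateRow (Fin 1) v * A⁻¹ * replicateCol (Fin 1) v).det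
          = A.det + A.det * (v ⬝ᵥ (A⁻¹ *ᵥ v)) := by
        rw [h13]; ring
      convert h14 using 3 <;> congr <;> exact Subsingleton.elim _ _
    have hFG : F = G := hFc.ext_on (dense_compl_singleton (0 : ℝ)) hGc hEq
    have h13 := congrFun hFG 0
    rw [hF, hG] at h13
    simpa [hdet, hB] using h13
  -- conclude positivity of d
  have hdpos : 0 < d := by
    rw [hkey, hadj2] at hdetB
    rw [smul_mulVec, dotProduct_smul, smul_eq_mul, dot_vecMulVec] at hdetB
    nlinarith [hvv]
  -- construct β
  set β : Fin n → ℝ := Real.sqrt d • v with hβ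
  have hββ : vecMulVec β β = d • vecMulVec v v := by
    ext i j
    simp only [vecMulVec_apply, hβ, Pi.smul_apply, smul_eq_mul, Matrix.smul_apply]
    have hs : Real.sqrt d * Real.sqrt d = d := Real.mul_self_sqrt hdpos.le
    calc Real.sqrt d * v i * (Real.sqrt d * v j)
        = Real.sqrt d * Real.sqrt d * (v i * v j) := by ring
      _ = d * (v i * v j) := by rw [hs]
  have hadjβ : Ω.adjugate = vecMulVec β β := by rw [hadj2, hββ]
  have hβ0 : β ≠ 0 := by
    rw [hβ]
    exact smul_ne_zero (ne_of_gt (Real.sqrt_pos.mpr hdpos)) hv0'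
  have hββpos : 0 < β ⬝ᵥ β := by
    rcases lt_or_eq_of_le (dotProduct_self_nonneg β) with h | h
    · exact h
    · exact absurd (dotProduct_self_eq_zero.mp h.symm) hβ0
  refine ⟨?_, ?_, β, hadjβ, ?_⟩
  · -- rank one
    have hrange : LinearMap.range (Ω.adjugate.mulVecLin) = Submodule.span ℝ {β} := by
      apply le_antisymm
      · rintro y ⟨x, rfl⟩
        rw [mulVecLin_apply, hadjβ, _root_.vecMulVec_mulVec]
        exact Submodule.smul_mem _ _ (Submodule.mem_span_singleton_self β)
      · rw [Submodule.span_le, Set.singleton_subset_iff]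
        refine ⟨(β ⬝ᵥ β)⁻¹ • β, ?_⟩
        rw [mulVecLin_apply, hadjβ, _root_.vecMulVec_mulVec, dotProduct_smul, smul_eq_mul,
          inv_mul_cancel₀ (ne_of_gt hββpos), one_smul]
    show Module.finrank ℝ (LinearMap.range (Ω.adjugate.mulVecLin)) = 1
    rw [hrange]
    exact finrank_span_singleton hβ0
  · -- positive semidefinite
    rw [posSemidef_iff_dotProduct_mulVec]
    constructor
    · show Ω.adjugateᴴ = Ω.adjugate
      rw [hadjβ]
      ext i j
      simp [vecMulVec_apply, mul_comm]
    · intro x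
      have h14 : star x = x := by simp
      rw [h14, hadjβ, dot_vecMulVec, dotProduct_comm β x]
      exact mul_self_nonneg _
  · intro X
    have h15 : X ⬝ᵥ (Ω.adjugate).mulVec X = (X ⬝ᵥ β) ^ 2 := by
      rw [show (Ω.adjugate).mulVec X = Ω.adjugate *ᵥ X from rfl, hadjβ, dot_vecMulVec,
        dotProduct_comm β X]
      ring
    rw [h15, Real.sqrt_sq_eq_abs]
end

section
/- Let D = det(aᵢⱼ) be the determinant of an N×N matrix over a commutative ring, and for indices j, k let D[j;k] denote the (N−1)×(N−1) minor obtained by deleting row j and column k, and D[j,k;l,m] the (N−2)×(N−2) minor obtained by deleting rows j,k and columns l,m (with j<k, l<m). Then for i < j: D[i;i]·D[j;j] − D[i;j]·D[j;i] = D·D[i,j;i,j]. -/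
open Matrix

section JacobiAux

variable {R : Type*} [CommRing R]

omit [CommRing R] in
lemma jacobi_submatrix_elim_elim {γ γ' n m n' m' : Type*} (A : Matrix γ γ' R)
    (a : n → γ) (b : m → γ) (c : n' → γ') (d : m' → γ') :
    A.submatrix (Sum.elim a b) (Sum.elim c d) =
      fromBlocks (A.submatrix a c) (A.submatrix a d) (A.submatrix b c) (A.submatrix b d) := by
  ext i j
  cases i <;> cases j <;> rfl

lemma jacobi_exists_equiv_comp {α β γ : Type*} [Fintype α] [Fintype β] [DecidableEq γ]
    {u : α → γ} {v : β → γ} (hv : Function.Injective v)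
    (hr : Set.range v ⊆ Set.range u) (hc : Fintype.card β = Fintype.card α) :
    ∃ g : β ≃ α, u ∘ g = v := by
  classical
  have h : ∀ b, ∃ a, u a = v b := fun b => hr ⟨b, rfl⟩
  choose g0 hg0 using h
  have hinj : Function.Injective g0 := fun b b' hbb => hv (by rw [← hg0, ← hg0, hbb])
  have hbij : Function.Bijective g0 := (Fintype.bijective_iff_injective_and_card g0).2 ⟨hinj, hc⟩
  exact ⟨Equiv.ofBijective g0 hbij, funext hg0⟩

lemma jacobi_det_submatrix_pair {l m : Type*} [Fintype l] [DecidableEq l] [Fintype m]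
    [DecidableEq m] (e₁ e₂ : l ≃ m) (M : Matrix m m R) :
    det (M.submatrix e₁ e₂) =
      ((Equiv.Perm.sign (e₁.trans e₂.symm) : ℤ) : R) * det M := by
  have h : M.submatrix e₁ e₂ = (M.submatrix e₂ e₂).submatrix (e₁.trans e₂.symm) id := by
    ext a b
    simp [submatrix_apply]
  rw [h]
  rw [show ((e₁.trans e₂.symm : l ≃ l) : l → l) = ((e₁.trans e₂.symm : Equiv.Perm l) : l → l)
    from rfl]
  rw [Matrix.det_permute (e₁.trans e₂.symm) (M.submatrix e₂ e₂), det_submatrix_equiv_self]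

lemma jacobi_core {N : ℕ}
    (A : Matrix (Fin (N + 2)) (Fin (N + 2)) R) (i j : Fin (N + 2)) (i' : Fin (N + 1))
    (hij : i < j) (hi' : Fin.castSucc i' = i)
    (hP : IsUnit (A.submatrix (fun k : Fin N => j.succAbove (i'.succAbove k))
        (fun k : Fin N => j.succAbove (i'.succAbove k))).det) :
    (A.submatrix i.succAbove i.succAbove).det * (A.submatrix j.succAbove j.succAbove).det -
      (A.submatrix i.succAbove j.succAbove).det * (A.submatrix j.succAbove i.succAbove).det =
    A.det * (A.submatrix (fun k : Fin N => j.succAbove (i'.succAbove k))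
        (fun k : Fin N => j.succAbove (i'.succAbove k))).det := by
  classical
  set f : Fin N → Fin (N + 2) := fun k => j.succAbove (i'.succAbove k) with hf
  set P : Matrix (Fin N) (Fin N) R := A.submatrix f f with hPdef
  haveI : Invertible P := Matrix.invertibleOfIsUnitDet P hP
  have hijne : i ≠ j := ne_of_lt hij
  have hji' : j.succAbove i' = i := by
    rw [Fin.succAbove_of_castSucc_lt _ _ (by rw [hi']; exact hij), hi']
  have hfinj : Function.Injective f := fun a b h =>
    Fin.succAbove_right_injective (Fin.succAbove_right_injective h)
  have hfi : ∀ k, f k ≠ i := by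
    intro k h
    rw [← hji'] at h
    exact Fin.succAbove_ne i' k (Fin.succAbove_right_injective h)
  have hfj : ∀ k, f k ≠ j := fun k => Fin.succAbove_ne j _
  -- the big equivalence
  have hv2 : Function.Injective (Sum.elim f ![i, j]) := by
    rintro (a | a) (b | b) h
    · rw [hfinj h]
    · exfalso
      fin_cases b <;> simp at h
      · exact hfi a h
      · exact hfj a h
    · exfalso
      fin_cases a <;> simp at h
      · exact hfi b h.symm
      · exact hfj b h.symm
    · fin_cases a <;> fin_cases b <;> simp_all
  let e : (Fin N ⊕ Fin 2) ≃ Fin (N + 2) :=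
    Equiv.ofBijective _ ((Fintype.bijective_iff_injective_and_card _).2 ⟨hv2, by simp⟩)
  have he : (e : (Fin N ⊕ Fin 2) → Fin (N + 2)) = Sum.elim f ![i, j] := rfl
  -- equivalences for the one-row-deleted minors
  have hvj : Function.Injective (Sum.elim f ![j]) := by
    rintro (a | a) (b | b) h
    · rw [hfinj h]
    · exfalso; fin_cases b; simp at h; exact hfj a h
    · exfalso; fin_cases a; simp at h; exact hfj b h.symm
    · fin_cases a <;> fin_cases b <;> rfl
  have hvi : Function.Injective (Sum.elim f ![i]) := by
    rintro (a | a) (b | b) h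
    · rw [hfinj h]
    · exfalso; fin_cases b; simp at h; exact hfi a h
    · exfalso; fin_cases a; simp at h; exact hfi b h.symm
    · fin_cases a <;> fin_cases b <;> rfl
  obtain ⟨g₁, hg₁⟩ : ∃ g : (Fin N ⊕ Fin 1) ≃ Fin (N + 1),
      i.succAbove ∘ g = Sum.elim f ![j] := by
    refine jacobi_exists_equiv_comp hvj ?_ (by simp)
    rintro x ⟨y, rfl⟩
    rw [Fin.range_succAbove]
    rcases y with y | y
    · exact hfi y
    · fin_cases y; simpa using hijne.symm
  obtain ⟨g₂, hg₂⟩ : ∃ g : (Fin N ⊕ Fin 1) ≃ Fin (N + 1),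
      j.succAbove ∘ g = Sum.elim f ![i] := by
    refine jacobi_exists_equiv_comp hvi ?_ (by simp)
    rintro x ⟨y, rfl⟩
    rw [Fin.range_succAbove]
    rcases y with y | y
    · exact hfj y
    · fin_cases y; simpa using hijne
  -- Schur complement scalars
  set b : Fin (N + 2) → Fin (N + 2) → R := fun y x =>
    (A.submatrix ![y] ![x] - A.submatrix ![y] f * ⅟P * A.submatrix f ![x]).det with hb
  have key : ∀ y x : Fin (N + 2),
      (A.submatrix (Sum.elim f ![y]) (Sum.elim f ![x])).det = P.det * b y x := by
    intro y x
    rw [jacobi_submatrix_elim_elim, det_fromBlocks₁₁]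
  have hDii : (A.submatrix i.succAbove i.succAbove).det = P.det * b j j := by
    rw [← det_submatrix_equiv_self g₁ (A.submatrix i.succAbove i.succAbove),
      submatrix_submatrix, hg₁, key]
  have hDjj : (A.submatrix j.succAbove j.succAbove).det = P.det * b i i := by
    rw [← det_submatrix_equiv_self g₂ (A.submatrix j.succAbove j.succAbove),
      submatrix_submatrix, hg₂, key]
  set s₁ : R := ((Equiv.Perm.sign (g₁.trans g₂.symm) : ℤ) : R) with hs₁
  set s₂ : R := ((Equiv.Perm.sign (g₂.trans g₁.symm) : ℤ) : R) with hs₂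
  have hDij : P.det * b j i = s₁ * (A.submatrix i.succAbove j.succAbove).det := by
    rw [← key j i, ← hg₁, ← hg₂, ← submatrix_submatrix, jacobi_det_submatrix_pair]
  have hDji : P.det * b i j = s₂ * (A.submatrix j.succAbove i.succAbove).det := by
    rw [← key i j, ← hg₂, ← hg₁, ← submatrix_submatrix, jacobi_det_submatrix_pair]
  have hs : s₁ * s₂ = 1 := by
    have h1 : (g₂.trans g₁.symm) = (g₁.trans g₂.symm)⁻¹ := by
      ext x; simp [Equiv.Perm.inv_def]
    rw [hs₁, hs₂, h1, Equiv.Perm.sign_inv, ← Int.cast_mul, ← Units.val_mul,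
      Int.units_mul_self, Units.val_one, Int.cast_one]
  -- determinant of A
  have hdetA : A.det = P.det * (b i i * b j j - b i j * b j i) := by
    rw [← det_submatrix_equiv_self e A, he, jacobi_submatrix_elim_elim, det_fromBlocks₁₁]
    congr 1
    have hentry : ∀ (v w : Fin 2 → Fin (N + 2)) (r c : Fin 2),
        (A.submatrix v w - A.submatrix v f * ⅟P * A.submatrix f w) r c = b (v r) (w c) := by
      intro v w r c
      simp only [hb, Matrix.det_fin_one, Matrix.sub_apply, Matrix.mul_apply, submatrix_apply]
      simp
    rw [Matrix.det_fin_two]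
    rw [hentry, hentry, hentry, hentry]
    simp
  -- final algebra
  have hcross : (A.submatrix i.succAbove j.succAbove).det *
      (A.submatrix j.succAbove i.succAbove).det = P.det * b j i * (P.det * b i j) := by
    calc (A.submatrix i.succAbove j.succAbove).det * (A.submatrix j.succAbove i.succAbove).det
        = (s₁ * s₂) * ((A.submatrix i.succAbove j.succAbove).det *
            (A.submatrix j.succAbove i.succAbove).det) := by rw [hs]; ring
      _ = (s₁ * (A.submatrix i.succAbove j.succAbove).det) *
            (s₂ * (A.submatrix j.succAbove i.succAbove).det) := by ring
      _ = P.det * b j i * (P.det * b i j) := by rw [← hDij, ← hDji]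
  rw [hDii, hDjj, hdetA]
  linear_combination -hcross

lemma jacobi_stmt_map {S T : Type*} [CommRing S] [CommRing T] (ψ : S →+* T) {N : ℕ}
    (X : Matrix (Fin (N + 2)) (Fin (N + 2)) S) (i j : Fin (N + 2)) (i' : Fin (N + 1))
    (h : (X.submatrix i.succAbove i.succAbove).det * (X.submatrix j.succAbove j.succAbove).det -
      (X.submatrix i.succAbove j.succAbove).det * (X.submatrix j.succAbove i.succAbove).det =
    X.det * (X.submatrix (fun k : Fin N => j.succAbove (i'.succAbove k))
        (fun k : Fin N => j.succAbove (i'.succAbove k))).det) :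
    ((X.map ψ).submatrix i.succAbove i.succAbove).det *
        ((X.map ψ).submatrix j.succAbove j.succAbove).det -
      ((X.map ψ).submatrix i.succAbove j.succAbove).det *
        ((X.map ψ).submatrix j.succAbove i.succAbove).det =
    (X.map ψ).det * ((X.map ψ).submatrix (fun k : Fin N => j.succAbove (i'.succAbove k))
        (fun k : Fin N => j.succAbove (i'.succAbove k))).det := by
  have hsub : ∀ {p : Type} [Fintype p] [DecidableEq p] (u v : p → Fin (N + 2)),
      ((X.map ψ).submatrix u v).det = ψ (X.submatrix u v).det := by
    intro p _ _ u v
    rw [Matrix.submatrix_map, RingHom.map_det, RingHom.mapMatrix_apply]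
  have hd : (X.map ψ).det = ψ X.det := by
    rw [RingHom.map_det, RingHom.mapMatrix_apply]
  rw [hsub, hsub, hsub, hsub, hsub, hd]
  simpa only [_root_.map_mul, _root_.map_sub] using congrArg ψ h

end JacobiAux

theorem jacobi_identity_minors {R : Type*} [CommRing R] {N : ℕ}
    (A : Matrix (Fin (N + 2)) (Fin (N + 2)) R) (i j : Fin (N + 2)) (hij : i < j) :
    (A.submatrix i.succAbove i.succAbove).det * (A.submatrix j.succAbove j.succAbove).det -
      (A.submatrix i.succAbove j.succAbove).det * (A.submatrix j.succAbove i.succAbove).det =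
    A.det *
      (A.submatrix (fun k : Fin N => j.succAbove ((Fin.castLT i (by omega)).succAbove k))
        (fun k : Fin N => j.succAbove ((Fin.castLT i (by omega)).succAbove k))).det := by
  classical
  set i' : Fin (N + 1) := Fin.castLT i (by omega) with hi'def
  have hi' : Fin.castSucc i' = i := Fin.castSucc_castLT i _
  set f : Fin N → Fin (N + 2) := fun k => j.succAbove (i'.succAbove k) with hfdef
  have hfinj : Function.Injective f := fun a b h =>
    Fin.succAbove_right_injective (Fin.succAbove_right_injective h)
  set σR := MvPolynomial (Fin (N + 2) × Fin (N + 2)) ℤ with hσR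
  set K := FractionRing σR with hK
  set X : Matrix (Fin (N + 2)) (Fin (N + 2)) σR :=
    mvPolynomialX (Fin (N + 2)) (Fin (N + 2)) ℤ with hX
  -- the relevant generic minor is nonzero
  have hXsub : X.submatrix f f =
      (mvPolynomialX (Fin N) (Fin N) ℤ).map (MvPolynomial.rename (Prod.map f f)) := by
    ext k l
    simp [hX, mvPolynomialX_apply, MvPolynomial.rename_X]
  have hdet0 : (X.submatrix f f).det ≠ 0 := by
    rw [hXsub]
    have := RingHom.map_det ((MvPolynomial.rename (Prod.map f f)).toRingHom :
      MvPolynomial (Fin N × Fin N) ℤ →+* σR) (mvPolynomialX (Fin N) (Fin N) ℤ)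
    rw [RingHom.mapMatrix_apply] at this
    rw [show ((mvPolynomialX (Fin N) (Fin N) ℤ).map (MvPolynomial.rename (Prod.map f f)) :
        Matrix (Fin N) (Fin N) σR) =
        (mvPolynomialX (Fin N) (Fin N) ℤ).map
          ((MvPolynomial.rename (Prod.map f f)).toRingHom) from rfl, ← this]
    intro habs
    have hrinj : Function.Injective
        (MvPolynomial.rename (Prod.map f f) :
          MvPolynomial (Fin N × Fin N) ℤ → σR) :=
      MvPolynomial.rename_injective _ (hfinj.prodMap hfinj)
    have : (mvPolynomialX (Fin N) (Fin N) ℤ).det = 0 := by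
      apply hrinj
      simpa using habs
    exact det_mvPolynomialX_ne_zero (Fin N) ℤ this
  -- Jacobi identity for the generic matrix over the fraction field
  have hφinj : Function.Injective (algebraMap σR K) := IsFractionRing.injective σR K
  have hKid := jacobi_core (X.map (algebraMap σR K)) i j i' hij hi' (by
    have : ((X.map (algebraMap σR K)).submatrix f f).det ≠ 0 := by
      rw [Matrix.submatrix_map, ← RingHom.mapMatrix_apply, ← RingHom.map_det]
      exact fun habs => hdet0 (hφinj (by simpa using habs))
    exact isUnit_iff_ne_zero.mpr this)
  -- pull back to the polynomial ring
  have hXid : (X.submatrix i.succAbove i.succAbove).det *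
        (X.submatrix j.succAbove j.succAbove).det -
      (X.submatrix i.succAbove j.succAbove).det * (X.submatrix j.succAbove i.succAbove).det =
    X.det * (X.submatrix (fun k : Fin N => j.succAbove (i'.succAbove k))
        (fun k : Fin N => j.succAbove (i'.succAbove k))).det := by
    apply hφinj
    have hsub : ∀ {p : Type} [Fintype p] [DecidableEq p] (u v : p → Fin (N + 2)),
        algebraMap σR K (X.submatrix u v).det =
          ((X.map (algebraMap σR K)).submatrix u v).det := by
      intro p _ _ u v
      rw [Matrix.submatrix_map, ← RingHom.mapMatrix_apply, ← RingHom.map_det]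
    simp only [_root_.map_sub, _root_.map_mul, hsub]
    rw [RingHom.map_det, RingHom.mapMatrix_apply]
    exact hKid
  -- push forward to R
  have hmain := jacobi_stmt_map
    (MvPolynomial.eval₂Hom (Int.castRingHom R) (fun p : Fin (N + 2) × Fin (N + 2) => A p.1 p.2))
    X i j i' hXid
  have hA : X.map (MvPolynomial.eval₂Hom (Int.castRingHom R)
      (fun p : Fin (N + 2) × Fin (N + 2) => A p.1 p.2)) = A := by
    rw [hX]
    rw [show (⇑(MvPolynomial.eval₂Hom (Int.castRingHom R)
        (fun p : Fin (N + 2) × Fin (N + 2) => A p.1 p.2)) :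
        σR → R) = MvPolynomial.eval₂ (Int.castRingHom R)
        (fun p : Fin (N + 2) × Fin (N + 2) => A p.1 p.2) from
      MvPolynomial.coe_eval₂Hom _ _]
    exact mvPolynomialX_map_eval₂ (Int.castRingHom R) A
  rw [hA] at hmain
  exact hmain
end
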